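/- Let k ≥ 1, d ≥ 1, let v_0, …, v_{k−1} ∈ ℝ^d, let α ∈ [0, 1/2) with αk ∈ ℕ, and let H ⊆ {0,…,k−1} with |H| ≥ (1−α)k. Let v̄_H = (1/|H|) Σ_{i∈H} v_i and suppose max_{i∈H} ‖v_i − v̄_H‖_∞ ≤ r. Let v_med ∈ ℝ^d be a coordinatewise median of the v_i, i.e., for every coordinate j ∈ {1,…,d}, at least k/2 of the indices i satisfy [v_i]_j ≤ [v_med]_j and at least k/2 of the indices satisfy [v_i]_j ≥ [v_med]_j. For each coordinate j let N_j ⊆ {0,…,k−1} satisfy |N_j| = (1−α)k and |[v_i − v_med]_j| ≤ |[v_{i'} − v_med]_j| for all i ∈ N_j and all i' ∉ N_j, and define the robust mean estimate v̂ ∈ ℝ^d coordinatewise by [v̂]_j = (1/((1−α)k)) Σ_{i∈N_j} [v_i]_j. Then ‖v̂ − v̄_H‖ ≤ (2α/(1−α)) (1 + √((1−α)²/(1−2α))) · r · √d. -/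

import Mathlib

open Finset

set_option maxHeartbeats 1000000 in
/-- Guarantee for the median-based robust mean estimator (Proposition 1 of the paper):
the mean of the `(1-α)k` nearest neighbors (per coordinate) of the coordinatewise median
is close to the mean of the trustworthy vectors. -/
theorem robust_mean_estimator_bound
    (k d : ℕ) (hk : 1 ≤ k) (hd : 1 ≤ d)
    (v : Fin k → EuclideanSpace ℝ (Fin d))
    (α : ℝ) (hα0 : 0 ≤ α) (hα2 : α < 1 / 2)
    (hαk : ∃ a : ℕ, (a : ℝ) = α * k)
    (H : Finset (Fin k)) (hH : (1 - α) * k ≤ (H.card : ℝ))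
    (vbar : EuclideanSpace ℝ (Fin d))
    (hvbar : vbar = (H.card : ℝ)⁻¹ • ∑ i ∈ H, v i)
    (r : ℝ)
    (hr : ∀ i ∈ H, ∀ j : Fin d, |v i j - vbar j| ≤ r)
    (vmed : EuclideanSpace ℝ (Fin d))
    (hmed_le : ∀ j : Fin d,
      (k : ℝ) / 2 ≤ ((Finset.univ.filter fun i => v i j ≤ vmed j).card : ℝ))
    (hmed_ge : ∀ j : Fin d,
      (k : ℝ) / 2 ≤ ((Finset.univ.filter fun i => vmed j ≤ v i j).card : ℝ))
    (Nset : Fin d → Finset (Fin k))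
    (hNcard : ∀ j : Fin d, ((Nset j).card : ℝ) = (1 - α) * k)
    (hNnear : ∀ j : Fin d, ∀ i ∈ Nset j, ∀ i' ∉ Nset j,
      |v i j - vmed j| ≤ |v i' j - vmed j|)
    (vhat : EuclideanSpace ℝ (Fin d))
    (hvhat : ∀ j : Fin d, vhat j = (1 / ((1 - α) * k)) * ∑ i ∈ Nset j, v i j) :
    ‖vhat - vbar‖ ≤
      (2 * α / (1 - α)) * (1 + Real.sqrt ((1 - α) ^ 2 / (1 - 2 * α))) * r * Real.sqrt d := by
  have hk' : (0:ℝ) < k := by exact_mod_cast hk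
  have h1α : (0:ℝ) < 1 - α := by linarith
  have hc : (0:ℝ) < (1 - α) * k := by positivity
  have hHpos : (0:ℝ) < H.card := lt_of_lt_of_le hc hH
  have hHne : H.Nonempty := Finset.card_pos.mp (by exact_mod_cast hHpos)
  obtain ⟨i0, hi0⟩ := hHne
  have hr0 : 0 ≤ r := le_trans (abs_nonneg _) (hr i0 hi0 ⟨0, hd⟩)
  -- intersection lemma
  have hinter : ∀ S : Finset (Fin k), (k:ℝ)/2 ≤ S.card → (S ∩ H).Nonempty := by
    intro S hS
    have h1 : ((S ∩ H).card : ℝ) + ((S ∪ H).card : ℝ) = (S.card : ℝ) + H.card := by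
      exact_mod_cast congrArg (Nat.cast (R := ℝ)) (Finset.card_inter_add_card_union S H)
    have h2 : ((S ∪ H).card : ℝ) ≤ k := by
      have := Finset.card_le_univ (S ∪ H)
      simpa using (Nat.cast_le.mpr this : ((S ∪ H).card : ℝ) ≤ (Fintype.card (Fin k) : ℝ))
    have hpos : (0:ℝ) < (S ∩ H).card := by nlinarith
    exact Finset.card_pos.mp (by exact_mod_cast hpos)
  -- median is close to vbar in every coordinate
  have hmedbar : ∀ j : Fin d, |vmed j - vbar j| ≤ r := by
    intro j
    obtain ⟨i1, hi1⟩ := hinter _ (hmed_ge j)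
    rw [Finset.mem_inter, Finset.mem_filter] at hi1
    obtain ⟨i2, hi2⟩ := hinter _ (hmed_le j)
    rw [Finset.mem_inter, Finset.mem_filter] at hi2
    have h1 := abs_le.mp (hr i1 hi1.2 j)
    have h2 := abs_le.mp (hr i2 hi2.2 j)
    rw [abs_le]
    constructor
    · linarith [hi2.1.2]
    · linarith [hi1.1.2]
  -- key per-coordinate bound
  have key : ∀ j : Fin d, |vhat j - vbar j| ≤ 4 * α / (1 - α) * r := by
    intro j
    have hNk : ((Nset j).card : ℝ) = (1-α)*k := hNcard j
    have hμ : vbar j * H.card = ∑ i ∈ H, v i j := by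
      have hb : vbar j = (H.card:ℝ)⁻¹ * ∑ i ∈ H, v i j := by
        rw [hvbar]
        simp only [PiLp.smul_apply, smul_eq_mul]
        rw [WithLp.ofLp_sum, Finset.sum_apply]
      rw [hb]; field_simp
    have hsumH : ∑ i ∈ H, (v i j - vbar j) = 0 := by
      rw [Finset.sum_sub_distrib, Finset.sum_const, nsmul_eq_mul]
      linarith [hμ]
    have hsplit : ∑ i ∈ Nset j, (v i j - vbar j)
        = ∑ i ∈ Nset j \ H, (v i j - vbar j) - ∑ i ∈ H \ Nset j, (v i j - vbar j) := by
      have h1 := Finset.sum_inter_add_sum_sdiff (Nset j) H (fun i => v i j - vbar j)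
      have h2 := Finset.sum_inter_add_sum_sdiff H (Nset j) (fun i => v i j - vbar j)
      rw [Finset.inter_comm] at h2
      simp only at h1 h2
      linarith [hsumH]
    have hdiff : vhat j - vbar j = (1/((1-α)*k)) * ∑ i ∈ Nset j, (v i j - vbar j) := by
      rw [hvhat j, Finset.sum_sub_distrib, Finset.sum_const, nsmul_eq_mul, hNk]
      field_simp
    have hNH : ((Nset j \ H).card : ℝ) ≤ α * k := by
      have hsub : Nset j \ H ⊆ Hᶜ := by
        intro i hi
        simp only [Finset.mem_compl]
        exact (Finset.mem_sdiff.mp hi).2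
      have h1 : ((Nset j \ H).card : ℝ) ≤ (Hᶜ.card : ℝ) :=
        Nat.cast_le.mpr (Finset.card_le_card hsub)
      have h2 : (Hᶜ.card : ℝ) = k - H.card := by
        rw [Finset.card_compl]
        rw [Nat.cast_sub (by simpa using Finset.card_le_univ H)]
        simp
      nlinarith
    have hHN : ((H \ Nset j).card : ℝ) ≤ α * k := by
      have hsub : H \ Nset j ⊆ (Nset j)ᶜ := by
        intro i hi
        simp only [Finset.mem_compl]
        exact (Finset.mem_sdiff.mp hi).2
      have h1 : ((H \ Nset j).card : ℝ) ≤ ((Nset j)ᶜ.card : ℝ) :=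
        Nat.cast_le.mpr (Finset.card_le_card hsub)
      have h2 : ((Nset j)ᶜ.card : ℝ) = k - (Nset j).card := by
        rw [Finset.card_compl]
        rw [Nat.cast_sub (by simpa using Finset.card_le_univ (Nset j))]
        simp
      nlinarith
    by_cases hHsub : H ⊆ Nset j
    · have hNle : (Nset j).card ≤ H.card := by
        have : ((Nset j).card : ℝ) ≤ (H.card : ℝ) := by rw [hNk]; exact hH
        exact_mod_cast this
      have hEq : H = Nset j := Finset.eq_of_subset_of_card_le hHsub hNle
      have : vhat j - vbar j = 0 := by
        rw [hdiff, hsplit, hEq]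
        simp
      rw [this, abs_zero]
      positivity
    · obtain ⟨i', hi'H, hi'N⟩ := Finset.not_subset.mp hHsub
      have hbound3 : ∀ i ∈ Nset j, |v i j - vbar j| ≤ 3 * r := by
        intro i hi
        have h1 := hNnear j i hi i' hi'N
        have h2 := hr i' hi'H j
        have h3 := hmedbar j
        have t1 : |v i j - vbar j| ≤ |v i j - vmed j| + |vmed j - vbar j| :=
          abs_sub_le _ _ _
        have t2 : |v i' j - vmed j| ≤ |v i' j - vbar j| + |vbar j - vmed j| :=
          abs_sub_le _ _ _
        have t3 : |vbar j - vmed j| = |vmed j - vbar j| := abs_sub_comm _ _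
        linarith
      have hb1 : |∑ i ∈ Nset j \ H, (v i j - vbar j)| ≤ ((Nset j \ H).card : ℝ) * (3*r) := by
        calc |∑ i ∈ Nset j \ H, (v i j - vbar j)| ≤ ∑ i ∈ Nset j \ H, |v i j - vbar j| :=
              Finset.abs_sum_le_sum_abs _ _
          _ ≤ ∑ _i ∈ Nset j \ H, (3*r) := by
              apply Finset.sum_le_sum
              intro i hi
              exact hbound3 i (Finset.mem_sdiff.mp hi).1
          _ = ((Nset j \ H).card : ℝ) * (3*r) := by rw [Finset.sum_const, nsmul_eq_mul]
      have hb2 : |∑ i ∈ H \ Nset j, (v i j - vbar j)| ≤ ((H \ Nset j).card : ℝ) * r := by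
        calc |∑ i ∈ H \ Nset j, (v i j - vbar j)| ≤ ∑ i ∈ H \ Nset j, |v i j - vbar j| :=
              Finset.abs_sum_le_sum_abs _ _
          _ ≤ ∑ _i ∈ H \ Nset j, r := by
              apply Finset.sum_le_sum
              intro i hi
              exact hr i (Finset.mem_sdiff.mp hi).1 j
          _ = ((H \ Nset j).card : ℝ) * r := by rw [Finset.sum_const, nsmul_eq_mul]
      have hsum_bound : |∑ i ∈ Nset j, (v i j - vbar j)| ≤ 4 * α * k * r := by
        rw [hsplit]
        have := abs_sub (∑ i ∈ Nset j \ H, (v i j - vbar j)) (∑ i ∈ H \ Nset j, (v i j - vbar j))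
        have m1 : ((Nset j \ H).card : ℝ) * (3*r) ≤ α * k * (3*r) :=
          mul_le_mul_of_nonneg_right hNH (by linarith)
        have m2 : ((H \ Nset j).card : ℝ) * r ≤ α * k * r :=
          mul_le_mul_of_nonneg_right hHN hr0
        calc |∑ i ∈ Nset j \ H, (v i j - vbar j) - ∑ i ∈ H \ Nset j, (v i j - vbar j)|
            ≤ |∑ i ∈ Nset j \ H, (v i j - vbar j)| + |∑ i ∈ H \ Nset j, (v i j - vbar j)| :=
              abs_sub _ _
          _ ≤ 4 * α * k * r := by linarith
      rw [hdiff, abs_mul, abs_of_pos (by positivity : (0:ℝ) < 1/((1-α)*k))]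
      have heq : 1/((1-α)*k) * (4 * α * k * r) = 4 * α / (1 - α) * r := by
        field_simp
      calc 1/((1-α)*k) * |∑ i ∈ Nset j, (v i j - vbar j)|
          ≤ 1/((1-α)*k) * (4 * α * k * r) := by
            apply mul_le_mul_of_nonneg_left hsum_bound
            positivity
        _ = 4 * α / (1 - α) * r := heq
  -- combine coordinates
  set B : ℝ := 4 * α / (1 - α) * r with hB
  have hB0 : 0 ≤ B := by positivity
  have hnorm : ‖vhat - vbar‖ ≤ B * Real.sqrt d := by
    rw [EuclideanSpace.norm_eq]
    have hsum : ∑ j, ‖(vhat - vbar) j‖^2 ≤ (d : ℝ) * B^2 := by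
      calc ∑ j, ‖(vhat - vbar) j‖^2 ≤ ∑ _j : Fin d, B^2 := by
            apply Finset.sum_le_sum
            intro j _
            have h1 : ‖(vhat - vbar) j‖ = |vhat j - vbar j| := by
              simp [PiLp.sub_apply, Real.norm_eq_abs]
            rw [h1]
            have := key j
            nlinarith [abs_nonneg (vhat j - vbar j)]
        _ = (d : ℝ) * B^2 := by
            rw [Finset.sum_const, Finset.card_univ, Fintype.card_fin, nsmul_eq_mul]
    calc Real.sqrt (∑ j, ‖(vhat - vbar) j‖^2) ≤ Real.sqrt ((d : ℝ) * B^2) :=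
          Real.sqrt_le_sqrt hsum
      _ = Real.sqrt d * Real.sqrt (B^2) := Real.sqrt_mul (by positivity) _
      _ = B * Real.sqrt d := by rw [Real.sqrt_sq hB0]; ring
  -- compare constants
  have h12 : (0:ℝ) < 1 - 2*α := by linarith
  have hs1 : 1 ≤ Real.sqrt ((1-α)^2/(1-2*α)) := by
    have h1 : (1:ℝ) ≤ (1-α)^2/(1-2*α) := by
      rw [le_div_iff₀ h12]; nlinarith
    calc (1:ℝ) = Real.sqrt 1 := Real.sqrt_one.symm
      _ ≤ _ := Real.sqrt_le_sqrt h1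
  have hCB : B ≤ (2 * α / (1 - α)) * (1 + Real.sqrt ((1 - α) ^ 2 / (1 - 2 * α))) * r := by
    rw [hB]
    have h2α : (0:ℝ) ≤ 2 * α / (1 - α) := by positivity
    have hconst : 4 * α / (1 - α) ≤ (2 * α / (1 - α)) * (1 + Real.sqrt ((1 - α) ^ 2 / (1 - 2 * α))) := by
      have hm := mul_le_mul_of_nonneg_left hs1 h2α
      have e1 : 2 * α / (1 - α) * (1 + Real.sqrt ((1 - α) ^ 2 / (1 - 2 * α)))
          = 2 * α / (1 - α) * 1 + 2 * α / (1 - α) * Real.sqrt ((1 - α) ^ 2 / (1 - 2 * α)) := by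
        ring
      have e2 : 4 * α / (1 - α) = 2 * α / (1 - α) * 1 + 2 * α / (1 - α) * 1 := by ring
      rw [e1, e2]
      linarith [hm]
    exact mul_le_mul_of_nonneg_right hconst hr0
  calc ‖vhat - vbar‖ ≤ B * Real.sqrt d := hnorm
    _ ≤ (2 * α / (1 - α)) * (1 + Real.sqrt ((1 - α) ^ 2 / (1 - 2 * α))) * r * Real.sqrt d := by
        apply mul_le_mul_of_nonneg_right hCB (Real.sqrt_nonneg _)
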